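/- Let W = (W₁, W₂) be a standard two-dimensional Brownian motion. Then for 0 < t ≤ a, P(max_{0 ≤ s ≤ t}(|W(s)| + s/2) ≥ a) ≤ (16√t)/(a√π) · exp(−a²/(16t)). -/

import Mathlib

open MeasureTheory

/-- A standard one-dimensional Brownian motion started at 0. -/
structure IsStandardBM {Ω : Type*} [MeasurableSpace Ω] (μ : Measure Ω)
    (B : ℝ → Ω → ℝ) : Prop where
  meas : ∀ t, Measurable (B t)
  start : ∀ᵐ ω ∂μ, B 0 ω = 0
  cont : ∀ᵐ ω ∂μ, Continuous fun t => B t ω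
  incr_law : ∀ s t : ℝ, 0 ≤ s → s ≤ t →
    Measure.map (fun ω => B t ω - B s ω) μ = ProbabilityTheory.gaussianReal 0 ((t - s).toNNReal)
  indep_incr : ∀ n : ℕ, ∀ u : Fin (n + 1) → ℝ, Monotone u → (∀ i, 0 ≤ u i) →
    ProbabilityTheory.iIndepFun
      (fun i : Fin n => fun ω => B (u i.succ) ω - B (u i.castSucc) ω) μ


open ProbabilityTheory Real Filter
open scoped NNReal ENNReal

section Helpers

variable {Ω : Type*} [MeasurableSpace Ω] {μ : Measure Ω} {B : ℝ → Ω → ℝ}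

lemma gauss_sym (v : ℝ≥0) : gaussianReal 0 v (Set.Iic 0) = gaussianReal 0 v (Set.Ici 0) := by
  have h := gaussianReal_map_const_mul (μ := 0) (v := v) (-1)
  have h2 : (NNReal.mk ((-1:ℝ)^2) (sq_nonneg _) : ℝ≥0) = 1 := by ext; norm_num
  rw [h2, one_mul, mul_zero] at h
  calc gaussianReal 0 v (Set.Iic 0)
      = gaussianReal 0 v ((fun x : ℝ => (-1) * x) ⁻¹' (Set.Ici 0)) := by
        congr 1; ext x; simp
    _ = ((gaussianReal 0 v).map (fun x : ℝ => (-1) * x)) (Set.Ici 0) := by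
        rw [Measure.map_apply (by fun_prop) measurableSet_Ici]
    _ = gaussianReal 0 v (Set.Ici 0) := by rw [show (fun x : ℝ => (-1) * x) = ((-1 : ℝ) * ·) from rfl, h]

lemma gauss_half (v : ℝ≥0) : 1 ≤ 2 * gaussianReal 0 v (Set.Ici 0) := by
  have h1 : (1 : ℝ≥0∞) = gaussianReal 0 v Set.univ := by simp
  have h2 : (Set.univ : Set ℝ) ⊆ Set.Iic 0 ∪ Set.Ici 0 := by
    intro x _; rcases le_total x 0 with h | h
    · exact Or.inl h
    · exact Or.inr h
  calc (1 : ℝ≥0∞) = gaussianReal 0 v Set.univ := h1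
    _ ≤ gaussianReal 0 v (Set.Iic 0 ∪ Set.Ici 0) := measure_mono h2
    _ ≤ gaussianReal 0 v (Set.Iic 0) + gaussianReal 0 v (Set.Ici 0) := measure_union_le _ _
    _ = 2 * gaussianReal 0 v (Set.Ici 0) := by rw [gauss_sym]; ring

lemma incr_measure (hB : IsStandardBM μ B) {s t : ℝ} (hs : 0 ≤ s) (hst : s ≤ t) (c : ℝ) :
    μ {ω | c ≤ B t ω - B s ω} = gaussianReal 0 ((t - s).toNNReal) (Set.Ici c) := by
  have hmap := hB.incr_law s t hs hst
  have : {ω | c ≤ B t ω - B s ω} = (fun ω => B t ω - B s ω) ⁻¹' (Set.Ici c) := rfl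
  rw [this, ← Measure.map_apply (by exact (hB.meas t).sub (hB.meas s)) measurableSet_Ici, hmap]

lemma incr_half (hB : IsStandardBM μ B) {s t : ℝ} (hs : 0 ≤ s) (hst : s ≤ t) :
    1 ≤ 2 * μ {ω | 0 ≤ B t ω - B s ω} := by
  rw [incr_measure hB hs hst 0]; exact gauss_half _

lemma levy_discrete [IsProbabilityMeasure μ] (hB : IsStandardBM μ B) {n : ℕ}
    (u : Fin (n+1) → ℝ) (hu : Monotone u) (hu0 : ∀ i, 0 ≤ u i) (c : ℝ) :
    μ {ω | ∃ k, c ≤ B (u k) ω - B (u 0) ω} ≤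
      2 * μ {ω | c ≤ B (u (Fin.last n)) ω - B (u 0) ω} := by
  classical
  set X : Fin n → Ω → ℝ := fun i ω => B (u i.succ) ω - B (u i.castSucc) ω with hX
  have hXmeas : ∀ i, Measurable (X i) := fun i => (hB.meas _).sub (hB.meas _)
  have hInd := hB.indep_incr n u hu hu0
  set T : Fin (n+1) → Ω → ℝ := fun k ω => B (u k) ω - B (u 0) ω with hT
  have hTmeas : ∀ k, Measurable (T k) := fun k => (hB.meas _).sub (hB.meas _)
  -- telescoping
  have htel : ∀ (k : Fin (n+1)) (ω : Ω),
      T k ω = ∑ i ∈ Finset.univ.filter (fun i : Fin n => i.castSucc < k), X i ω := by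
    intro k
    induction k using Fin.induction with
    | zero =>
      intro ω
      have : (Finset.univ.filter (fun i : Fin n => i.castSucc < 0)) = ∅ := by
        ext x; simp
      simp [this, hT]
    | succ i ih =>
      intro ω
      have hset : Finset.univ.filter (fun x : Fin n => x.castSucc < i.succ)
          = insert i (Finset.univ.filter (fun x : Fin n => x.castSucc < i.castSucc)) := by
        ext x
        simp only [Finset.mem_filter, Finset.mem_univ, true_and, Finset.mem_insert,
          Fin.lt_def, Fin.coe_castSucc, Fin.val_succ, Fin.ext_iff]
        omega
      have hni : i ∉ Finset.univ.filter (fun x : Fin n => x.castSucc < i.castSucc) := by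
        intro hmem
        simp only [Finset.mem_filter, Fin.lt_def, Fin.coe_castSucc] at hmem
        omega
      rw [hset, Finset.sum_insert hni, ← ih ω]
      simp only [hT, hX]
      ring
  -- the first passage decomposition
  set A : Fin (n+1) → Set Ω := fun k => {ω | c ≤ T k ω ∧ ∀ j < k, T j ω < c} with hA
  have hAmeas : ∀ k, MeasurableSet (A k) := by
    intro k
    have : A k = (T k) ⁻¹' (Set.Ici c) ∩ ⋂ j, ⋂ (_ : j < k), (T j) ⁻¹' (Set.Iio c) := by
      ext ω; simp [hA, Set.mem_iInter, and_comm]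
    rw [this]
    exact ((hTmeas k) measurableSet_Ici).inter
      (MeasurableSet.iInter fun j => MeasurableSet.iInter fun _ =>
        (hTmeas j) measurableSet_Iio)
  have hE : {ω | ∃ k, c ≤ T k ω} = ⋃ k, A k := by
    ext ω
    simp only [Set.mem_setOf_eq, Set.mem_iUnion]
    constructor
    · rintro ⟨k, hk⟩
      have hne : (Finset.univ.filter (fun j : Fin (n+1) => c ≤ T j ω)).Nonempty :=
        ⟨k, by simp [hk]⟩
      set m := (Finset.univ.filter (fun j : Fin (n+1) => c ≤ T j ω)).min' hne with hm
      have hmem := (Finset.univ.filter (fun j : Fin (n+1) => c ≤ T j ω)).min'_mem hne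
      rw [Finset.mem_filter] at hmem
      refine ⟨m, hmem.2, fun j hj => ?_⟩
      by_contra hcon
      push_neg at hcon
      have : m ≤ j := Finset.min'_le _ _ (by simp [hcon])
      exact absurd (lt_of_lt_of_le hj this) (lt_irrefl _)
    · rintro ⟨k, hk, _⟩
      exact ⟨k, hk⟩
  have hdisjA : Pairwise (Function.onFun Disjoint A) := by
    intro k l hne
    simp only [Function.onFun]
    rcases lt_or_gt_of_ne hne with h | h
    · rw [Set.disjoint_left]
      rintro ω ⟨hk, _⟩ ⟨_, hl2⟩
      exact absurd hk (not_le.mpr (hl2 k h))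
    · rw [Set.disjoint_left]
      rintro ω ⟨_, hk2⟩ ⟨hl, _⟩
      exact absurd hl (not_le.mpr (hk2 l h))
  -- key per-index bound
  have hkey : ∀ k : Fin (n+1),
      μ (A k) ≤ 2 * μ (A k ∩ {ω | 0 ≤ B (u (Fin.last n)) ω - B (u k) ω}) := by
    intro k
    set S : Finset (Fin n) := Finset.univ.filter (fun i : Fin n => i.castSucc < k) with hS
    set Sc : Finset (Fin n) := Finset.univ.filter (fun i : Fin n => ¬ i.castSucc < k) with hSc
    have hdisj : Disjoint S Sc := Finset.disjoint_filter_filter_not _ _ _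
    have hIF := hInd.indepFun_finset S Sc hdisj hXmeas
    -- functions of the coordinates
    set G : Fin (n+1) → ({i : Fin n // i ∈ S} → ℝ) → ℝ :=
      fun j v => ∑ i ∈ S.attach, if (i : Fin n).castSucc < j then v i else 0 with hG
    have hGmeas : ∀ j, Measurable (G j) := by
      intro j
      apply Finset.measurable_sum
      intro i _
      by_cases h : (i : Fin n).castSucc < j
      · simpa [h] using measurable_pi_apply i
      · simpa [h] using measurable_const
    have hGcomp : ∀ (j : Fin (n+1)), j ≤ k → ∀ ω,
        G j (fun i : {i : Fin n // i ∈ S} => X i ω) = T j ω := by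
      intro j hj ω
      rw [htel j ω]
      rw [hG]
      simp only []
      rw [Finset.sum_attach S (fun i => if i.castSucc < j then X i ω else 0)]
      rw [← Finset.sum_filter]
      congr 1
      ext x
      simp only [hS, Finset.mem_filter, Finset.mem_univ, true_and]
      exact ⟨fun h => h.2, fun h => ⟨lt_of_lt_of_le h hj, h⟩⟩
    -- the event A k as preimage
    set MS : Set ({i : Fin n // i ∈ S} → ℝ) := {v | c ≤ G k v ∧ ∀ j < k, G j v < c} with hMS
    have hMSmeas : MeasurableSet MS := by
      have : MS = (G k) ⁻¹' (Set.Ici c) ∩ ⋂ j, ⋂ (_ : j < k), (G j) ⁻¹' (Set.Iio c) := by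
        ext v
        simp only [hMS, Set.mem_setOf_eq, Set.mem_inter_iff, Set.mem_preimage, Set.mem_iInter,
          Set.mem_Ici, Set.mem_Iio]
      rw [this]
      exact ((hGmeas k) measurableSet_Ici).inter
        (MeasurableSet.iInter fun j => MeasurableSet.iInter fun _ => (hGmeas j) measurableSet_Iio)
    have hApre : A k = (fun ω (i : {i : Fin n // i ∈ S}) => X i ω) ⁻¹' MS := by
      ext ω
      simp only [hA, hMS, Set.mem_setOf_eq, Set.mem_preimage]
      constructor
      · rintro ⟨h1, h2⟩
        exact ⟨by rw [hGcomp k le_rfl ω]; exact h1,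
          fun j hj => by rw [hGcomp j hj.le ω]; exact h2 j hj⟩
      · rintro ⟨h1, h2⟩
        rw [hGcomp k le_rfl ω] at h1
        exact ⟨h1, fun j hj => by have := h2 j hj; rwa [hGcomp j hj.le ω] at this⟩
    -- the future increment as preimage
    set W : Set ({i : Fin n // i ∈ Sc} → ℝ) := {w | 0 ≤ ∑ i ∈ Sc.attach, w i} with hW
    have hWmeas : MeasurableSet W :=
      measurableSet_le measurable_const (Finset.measurable_sum _ fun i _ => measurable_pi_apply i)
    have hsumSc : ∀ ω, (∑ i ∈ Sc.attach, X i ω) = B (u (Fin.last n)) ω - B (u k) ω := by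
      intro ω
      have h1 : T (Fin.last n) ω = ∑ i ∈ Finset.univ, X i ω := by
        rw [htel]
        congr 1
        ext x
        simp only [Finset.mem_filter, Finset.mem_univ, true_and, Fin.lt_def, Fin.coe_castSucc,
          Fin.val_last, iff_true]
        exact x.2
      have h2 : (∑ i ∈ S, X i ω) + (∑ i ∈ Sc, X i ω) = ∑ i ∈ Finset.univ, X i ω :=
        Finset.sum_filter_add_sum_filter_not _ _ _
      have h3 : T k ω = ∑ i ∈ S, X i ω := htel k ω
      have h4 : (∑ i ∈ Sc.attach, X i ω) = ∑ i ∈ Sc, X i ω := Finset.sum_attach Sc (fun i => X i ω)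
      have h5 : T (Fin.last n) ω - T k ω = B (u (Fin.last n)) ω - B (u k) ω := by
        simp only [hT]; ring
      rw [h4]
      rw [h1, h3] at h5
      linarith [h2]
    have hDpre : {ω | 0 ≤ B (u (Fin.last n)) ω - B (u k) ω}
        = (fun ω (i : {i : Fin n // i ∈ Sc}) => X i ω) ⁻¹' W := by
      ext ω
      simp only [hW, Set.mem_setOf_eq, Set.mem_preimage, hsumSc ω]
    have hprod := hIF.measure_inter_preimage_eq_mul MS W hMSmeas hWmeas
    have h12 : 1 ≤ 2 * μ {ω | 0 ≤ B (u (Fin.last n)) ω - B (u k) ω} :=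
      incr_half hB (hu0 k) (hu (Fin.le_last k))
    calc μ (A k) = μ (A k) * 1 := (mul_one _).symm
      _ ≤ μ (A k) * (2 * μ {ω | 0 ≤ B (u (Fin.last n)) ω - B (u k) ω}) :=
          mul_le_mul_right h12 _
      _ = 2 * (μ (A k) * μ {ω | 0 ≤ B (u (Fin.last n)) ω - B (u k) ω}) := by ring
      _ = 2 * μ (A k ∩ {ω | 0 ≤ B (u (Fin.last n)) ω - B (u k) ω}) := by
          rw [hApre, hDpre, hprod]
  -- assemble
  have hDmeas : ∀ k : Fin (n+1), MeasurableSet {ω | 0 ≤ B (u (Fin.last n)) ω - B (u k) ω} :=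
    fun k => measurableSet_le measurable_const ((hB.meas _).sub (hB.meas _))
  have hsub : ∀ k : Fin (n+1), A k ∩ {ω | 0 ≤ B (u (Fin.last n)) ω - B (u k) ω}
      ⊆ {ω | c ≤ B (u (Fin.last n)) ω - B (u 0) ω} := by
    rintro k ω ⟨⟨h1, _⟩, h2⟩
    simp only [Set.mem_setOf_eq] at h2 ⊢
    simp only [hT, Set.mem_setOf_eq] at h1
    linarith
  have step1 : μ {ω | ∃ k, c ≤ B (u k) ω - B (u 0) ω} = ∑ k : Fin (n+1), μ (A k) := by
    have : {ω | ∃ k, c ≤ B (u k) ω - B (u 0) ω} = ⋃ k, A k := hE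
    rw [this, measure_iUnion hdisjA hAmeas, tsum_fintype]
  rw [step1]
  calc (∑ k : Fin (n+1), μ (A k))
      ≤ ∑ k : Fin (n+1), 2 * μ (A k ∩ {ω | 0 ≤ B (u (Fin.last n)) ω - B (u k) ω}) :=
        Finset.sum_le_sum fun k _ => hkey k
    _ = 2 * ∑ k : Fin (n+1), μ (A k ∩ {ω | 0 ≤ B (u (Fin.last n)) ω - B (u k) ω}) := by
        rw [Finset.mul_sum]
    _ = 2 * μ (⋃ k : Fin (n+1), A k ∩ {ω | 0 ≤ B (u (Fin.last n)) ω - B (u k) ω}) := by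
        rw [measure_iUnion, tsum_fintype]
        · exact fun k l hne => Set.disjoint_of_subset Set.inter_subset_left
            Set.inter_subset_left (hdisjA hne)
        · exact fun k => (hAmeas k).inter (hDmeas k)
    _ ≤ 2 * μ {ω | c ≤ B (u (Fin.last n)) ω - B (u 0) ω} := by
        gcongr
        exact Set.iUnion_subset hsub

lemma bm_sup_tail [IsProbabilityMeasure μ] (hB : IsStandardBM μ B) {t : ℝ} (ht : 0 < t)
    (c : ℝ) :
    μ {ω | ∃ s ∈ Set.Icc (0:ℝ) t, c ≤ B s ω} ≤ 2 * gaussianReal 0 t.toNNReal (Set.Ici c) := by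
  classical
  set q : ℕ → ℝ := fun n => max 0 (min t (((Denumerable.eqv ℚ).symm n : ℚ) : ℝ)) with hq
  have hqmem : ∀ n, q n ∈ Set.Icc (0:ℝ) t := by
    intro n
    constructor
    · exact le_max_left _ _
    · exact max_le ht.le (min_le_left _ _)
  set G : ℕ → ℕ → Set Ω := fun m n => {ω | c - 1/(m+1) ≤ B (q n) ω - B 0 ω} with hG
  -- a.e. inclusion into the union over rationals
  have hincl : ∀ m : ℕ, μ {ω | ∃ s ∈ Set.Icc (0:ℝ) t, c ≤ B s ω} ≤ μ (⋃ n, G m n) := by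
    intro m
    refine measure_mono_ae ?_
    filter_upwards [hB.cont, hB.start] with ω hcont hstart hmemE
    obtain ⟨s, hs, hcs⟩ := hmemE
    have hpos : (0:ℝ) < 1/(m+1) := by positivity
    obtain ⟨δ, hδpos, hδ⟩ := Metric.continuous_iff.mp hcont s (1/(m+1)) hpos
    obtain ⟨r, hr1, hr2⟩ := exists_rat_btwn (show s - δ < s by linarith)
    -- the clamped rational is one of the q n
    obtain ⟨n, hn⟩ : ∃ n, q n = max 0 (min t (r:ℝ)) :=
      ⟨(Denumerable.eqv ℚ) r, by
        rw [hq]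
        simp only [Equiv.symm_apply_apply]⟩
    have hclose : dist (q n) s < δ := by
      rw [hn]
      have h1 : min t (r:ℝ) = (r:ℝ) := min_eq_right (le_trans hr2.le hs.2)
      rw [h1]
      rw [Real.dist_eq, abs_lt]
      constructor
      · have : (r:ℝ) ≤ max 0 (r:ℝ) := le_max_right _ _
        linarith
      · have : max 0 (r:ℝ) ≤ s := max_le hs.1 hr2.le
        linarith
    have hBclose := hδ (q n) hclose
    rw [Real.dist_eq, abs_lt] at hBclose
    refine Set.mem_iUnion.mpr ⟨n, ?_⟩
    simp only [hG, Set.mem_setOf_eq, hstart, sub_zero]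
    linarith
  -- bound the union via the discrete Lévy inequality
  have haccum : ∀ m N : ℕ, μ (Set.accumulate (G m) N) ≤
      2 * gaussianReal 0 t.toNNReal (Set.Ici (c - 1/(m+1))) := by
    intro m N
    set F : Finset ℝ := insert 0 (insert t ((Finset.range (N+1)).image q)) with hF
    have hFmem : ∀ x ∈ F, 0 ≤ x ∧ x ≤ t := by
      intro x hx
      simp only [hF, Finset.mem_insert, Finset.mem_image, Finset.mem_range] at hx
      rcases hx with h | h | ⟨n, _, h⟩
      · subst h; exact ⟨le_rfl, ht.le⟩
      · subst h; exact ⟨ht.le, le_rfl⟩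
      · subst h; exact ⟨(hqmem n).1, (hqmem n).2⟩
    set L : List ℝ := F.sort (· ≤ ·) with hL
    have hsorted : L.Pairwise (· ≤ ·) := Finset.pairwise_sort _ _
    have hLmem : ∀ x, x ∈ L ↔ x ∈ F := fun x => Finset.mem_sort _
    have hLne : L ≠ [] := by
      intro h
      have : (0:ℝ) ∈ L := (hLmem 0).mpr (by rw [hF]; exact Finset.mem_insert_self _ _)
      rw [h] at this
      exact absurd this (List.not_mem_nil)
    have hlen : L.length - 1 + 1 = L.length :=
      Nat.succ_pred_eq_of_pos (List.length_pos_iff.mpr hLne)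
    set u : Fin (L.length - 1 + 1) → ℝ := fun i => L.get (Fin.cast hlen i) with hu
    have humem : ∀ i, u i ∈ F := fun i => (hLmem _).mp (L.get_mem _)
    have humono : Monotone u := by
      intro i j hij
      refine List.Pairwise.rel_get_of_le hsorted ?_
      simp only [Fin.le_def, Fin.coe_cast]
      exact Fin.le_def.mp hij
    have hu0' : ∀ i, 0 ≤ u i := fun i => (hFmem _ (humem i)).1
    have huzero : u 0 = 0 := by
      have h0mem : (0:ℝ) ∈ L := (hLmem 0).mpr (by
        rw [hF]; exact Finset.mem_insert_self _ _)
      obtain ⟨j, hj⟩ := List.get_of_mem h0mem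
      refine le_antisymm ?_ (hu0' 0)
      have : u 0 ≤ L.get j := List.Pairwise.rel_get_of_le hsorted (by simp [Fin.le_def])
      rw [hj] at this
      exact this
    have hulast : u (Fin.last _) = t := by
      have htmem : (t:ℝ) ∈ L := (hLmem t).mpr (by
        rw [hF]; exact Finset.mem_insert_of_mem (Finset.mem_insert_self _ _))
      obtain ⟨j, hj⟩ := List.get_of_mem htmem
      refine le_antisymm (hFmem _ (humem _)).2 ?_
      have : L.get j ≤ u (Fin.last _) := by
        apply List.Pairwise.rel_get_of_le hsorted
        simp only [Fin.le_def, Fin.coe_cast, Fin.val_last]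
        have := j.isLt
        omega
      rw [hj] at this
      exact this
    have hsub : Set.accumulate (G m) N ⊆
        {ω | ∃ k, c - 1/(m+1) ≤ B (u k) ω - B (u 0) ω} := by
      intro ω hω
      rw [Set.mem_accumulate] at hω
      obtain ⟨n, hnN, hωn⟩ := hω
      have hqF : q n ∈ F := by
        rw [hF]
        refine Finset.mem_insert_of_mem (Finset.mem_insert_of_mem ?_)
        exact Finset.mem_image.mpr ⟨n, Finset.mem_range.mpr (Nat.lt_succ_of_le hnN), rfl⟩
      obtain ⟨j, hj⟩ := List.get_of_mem ((hLmem _).mpr hqF)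
      refine ⟨Fin.cast hlen.symm j, ?_⟩
      have hcast : (Fin.cast hlen (Fin.cast hlen.symm j)) = j := by
        ext; simp
      have hval : u (Fin.cast hlen.symm j) = q n := by
        rw [hu]
        simp only []
        rw [hcast]
        exact hj
      rw [hval, huzero]
      simpa [hG] using hωn
    calc μ (Set.accumulate (G m) N)
        ≤ μ {ω | ∃ k, c - 1/(m+1) ≤ B (u k) ω - B (u 0) ω} := measure_mono hsub
      _ ≤ 2 * μ {ω | c - 1/(m+1) ≤ B (u (Fin.last _)) ω - B (u 0) ω} :=
          levy_discrete hB u humono hu0' _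
      _ = 2 * gaussianReal 0 t.toNNReal (Set.Ici (c - 1/(m+1))) := by
          rw [huzero, hulast, incr_measure hB (le_refl (0:ℝ)) ht.le, sub_zero]
  have hm : ∀ m : ℕ, μ {ω | ∃ s ∈ Set.Icc (0:ℝ) t, c ≤ B s ω} ≤
      2 * gaussianReal 0 t.toNNReal (Set.Ici (c - 1/(m+1))) := by
    intro m
    refine (hincl m).trans ?_
    rw [measure_iUnion_eq_iSup_accumulate]
    exact iSup_le fun N => haccum m N
  -- pass to the limit
  have hiInter : (⋂ m : ℕ, Set.Ici (c - 1/(m+1))) = Set.Ici c := by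
    ext x
    simp only [Set.mem_iInter, Set.mem_Ici]
    constructor
    · intro h
      by_contra hcon
      push_neg at hcon
      obtain ⟨m, hm'⟩ := exists_nat_one_div_lt (show (0:ℝ) < c - x by linarith)
      push_cast at hm'
      linarith [h m, hm']
    · intro h m
      have : (0:ℝ) < 1/(m+1) := by positivity
      linarith
  have htend : Filter.Tendsto (fun m : ℕ => gaussianReal 0 t.toNNReal (Set.Ici (c - 1/(m+1))))
      Filter.atTop (nhds (gaussianReal 0 t.toNNReal (Set.Ici c))) := by
    have := tendsto_measure_iInter_atTop (μ := gaussianReal 0 t.toNNReal)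
      (s := fun m : ℕ => Set.Ici (c - 1/(m+1)))
      (fun m => measurableSet_Ici.nullMeasurableSet)
      (fun i j hij => Set.Ici_subset_Ici.mpr (by
        have h1 : (1:ℝ)/(j+1) ≤ 1/(i+1) := by
          apply div_le_div_of_nonneg_left one_pos.le
          · positivity
          · exact_mod_cast Nat.add_le_add_right hij 1
        linarith)) ⟨0, measure_ne_top _ _⟩
    rw [hiInter] at this
    exact this
  have htend2 : Filter.Tendsto
      (fun m : ℕ => 2 * gaussianReal 0 t.toNNReal (Set.Ici (c - 1/(m+1))))
      Filter.atTop (nhds (2 * gaussianReal 0 t.toNNReal (Set.Ici c))) :=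
    ENNReal.Tendsto.const_mul htend (Or.inr (by norm_num))
  exact ge_of_tendsto htend2 (Filter.Eventually.of_forall hm)

lemma gauss_tail {c t : ℝ} (hc : 0 < c) (ht : 0 < t) :
    gaussianReal 0 t.toNNReal (Set.Ici c) ≤
      ENNReal.ofReal (Real.sqrt t / (c * Real.sqrt (2*π)) * Real.exp (-c^2/(2*t))) := by
  have hv : t.toNNReal ≠ 0 := by
    simp only [ne_eq, Real.toNNReal_eq_zero, not_le]
    exact ht
  have hvco : ((t.toNNReal : ℝ≥0) : ℝ) = t := Real.coe_toNNReal _ ht.le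
  rw [gaussianReal_apply_eq_integral 0 hv]
  apply ENNReal.ofReal_le_ofReal
  set K : ℝ := (Real.sqrt (2*π*t))⁻¹ with hK
  have hKpos : 0 < K := by rw [hK]; positivity
  have hpdf : ∀ x, gaussianPDFReal 0 t.toNNReal x = K * Real.exp (-(2*t)⁻¹ * x^2) := by
    intro x
    rw [gaussianPDFReal, hvco, hK, sub_zero]
    congr 1
    rw [Real.exp_eq_exp]
    field_simp
  have hint2 : Integrable (fun x => x * Real.exp (-(2*t)⁻¹ * x^2)) := by
    exact integrable_mul_exp_neg_mul_sq (by positivity)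
  have hint2' : IntegrableOn (fun x => (K/c) * (x * Real.exp (-(2*t)⁻¹ * x^2))) (Set.Ici c) :=
    ((hint2.const_mul (K/c)).restrict)
  have step1 : (∫ x in Set.Ici c, gaussianPDFReal 0 t.toNNReal x)
      ≤ ∫ x in Set.Ici c, (K/c) * (x * Real.exp (-(2*t)⁻¹ * x^2)) := by
    apply setIntegral_mono_on
    · exact (integrable_gaussianPDFReal 0 t.toNNReal).restrict
    · exact hint2'
    · exact measurableSet_Ici
    · intro x hx
      rw [hpdf x]
      have hx1 : (1:ℝ) ≤ x / c := (one_le_div hc).mpr hx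
      have hexp : 0 < Real.exp (-(2*t)⁻¹ * x^2) := Real.exp_pos _
      calc K * Real.exp (-(2*t)⁻¹ * x^2)
          ≤ (x/c) * (K * Real.exp (-(2*t)⁻¹ * x^2)) := by
            nth_rewrite 1 [← one_mul (K * _)]
            apply mul_le_mul_of_nonneg_right hx1 (by positivity)
        _ = (K/c) * (x * Real.exp (-(2*t)⁻¹ * x^2)) := by ring
  have hFTC : (∫ x in Set.Ioi c, x * Real.exp (-(2*t)⁻¹ * x^2))
      = t * Real.exp (-(2*t)⁻¹ * c^2) := by
    have hderiv : ∀ x ∈ Set.Ici c, HasDerivAt (fun y => -t * Real.exp (-(2*t)⁻¹ * y^2))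
        (x * Real.exp (-(2*t)⁻¹ * x^2)) x := by
      intro x _
      have h1 : HasDerivAt (fun y : ℝ => -(2*t)⁻¹ * y^2) (-(2*t)⁻¹ * (2*x)) x := by
        simpa using (hasDerivAt_pow 2 x).const_mul (-(2*t)⁻¹)
      have h2 := (h1.exp).const_mul (-t)
      refine h2.congr_deriv ?_
      have htt : t * (2*t)⁻¹ * 2 = 1 := by field_simp
      linear_combination (x * Real.exp (-(2*t)⁻¹ * x^2)) * htt
    have htendexp : Tendsto (fun y => -t * Real.exp (-(2*t)⁻¹ * y^2)) atTop (nhds 0) := by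
      have h3 : Tendsto (fun y : ℝ => -(2*t)⁻¹ * y^2) atTop atBot := by
        apply Tendsto.const_mul_atTop_of_neg (by simp; positivity)
        exact tendsto_pow_atTop (by norm_num)
      have h4 : Tendsto (fun y => Real.exp (-(2*t)⁻¹ * y^2)) atTop (nhds 0) :=
        Real.tendsto_exp_atBot.comp h3
      have := h4.const_mul (-t)
      simpa using this
    have := integral_Ioi_of_hasDerivAt_of_tendsto' hderiv (hint2.integrableOn) htendexp
    rw [this]
    simp
  calc (∫ x in Set.Ici c, gaussianPDFReal 0 t.toNNReal x)
      ≤ ∫ x in Set.Ici c, (K/c) * (x * Real.exp (-(2*t)⁻¹ * x^2)) := step1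
    _ = (K/c) * ∫ x in Set.Ici c, x * Real.exp (-(2*t)⁻¹ * x^2) := by
        rw [integral_const_mul]
    _ = (K/c) * ∫ x in Set.Ioi c, x * Real.exp (-(2*t)⁻¹ * x^2) := by
        rw [integral_Ici_eq_integral_Ioi]
    _ = (K/c) * (t * Real.exp (-(2*t)⁻¹ * c^2)) := by rw [hFTC]
    _ = Real.sqrt t / (c * Real.sqrt (2*π)) * Real.exp (-c^2/(2*t)) := by
        have h1 : Real.sqrt (2*π*t) = Real.sqrt (2*π) * Real.sqrt t :=
          Real.sqrt_mul (by positivity) t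
        have h2 : Real.sqrt t * Real.sqrt t = t := Real.mul_self_sqrt ht.le
        have h3 : -(2*t)⁻¹ * c^2 = -c^2/(2*t) := by field_simp
        rw [h3, hK, h1]
        have hsp : (0:ℝ) < Real.sqrt (2*π) := Real.sqrt_pos.mpr (by positivity)
        have hst : (0:ℝ) < Real.sqrt t := Real.sqrt_pos.mpr ht
        field_simp
        ring_nf
        rw [Real.sq_sqrt ht.le]

lemma gauss_map_neg (v : ℝ≥0) :
    (gaussianReal 0 v).map (fun x : ℝ => -x) = gaussianReal 0 v := by
  have h := gaussianReal_map_const_mul (μ := 0) (v := v) (-1)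
  have h2 : (NNReal.mk ((-1:ℝ)^2) (sq_nonneg _) : ℝ≥0) = 1 := by ext; norm_num
  rw [h2, one_mul, mul_zero] at h
  have h3 : (fun x : ℝ => -x) = ((-1 : ℝ) * ·) := by ext x; ring
  rw [h3, h]

lemma IsStandardBM.neg (hB : IsStandardBM μ B) : IsStandardBM μ (fun s ω => -B s ω) where
  meas t := (hB.meas t).neg
  start := by filter_upwards [hB.start] with ω h; simp [h]
  cont := by filter_upwards [hB.cont] with ω h; exact h.neg
  incr_law s t hs hst := by
    have heq : (fun ω => (fun s ω => -B s ω) t ω - (fun s ω => -B s ω) s ω)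
        = (fun x : ℝ => -x) ∘ (fun ω => B t ω - B s ω) := by
      ext ω; simp; ring
    rw [heq, ← Measure.map_map (g := fun x : ℝ => -x) (f := fun ω => B t ω - B s ω) measurable_neg ((hB.meas t).sub (hB.meas s)),
      hB.incr_law s t hs hst, gauss_map_neg]
  indep_incr n u hu hu0 := by
    have h := (hB.indep_incr n u hu hu0).comp (g := fun _ => fun x : ℝ => -x)
      (fun _ => measurable_neg)
    convert h using 2 with i
    ext ω
    simp
    ring

lemma one_sided [IsProbabilityMeasure μ] (hB : IsStandardBM μ B) {t c : ℝ} (ht : 0 < t)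
    (hc : 0 < c) :
    μ {ω | ∃ s ∈ Set.Icc (0:ℝ) t, c ≤ B s ω} ≤
      2 * ENNReal.ofReal (Real.sqrt t / (c * Real.sqrt (2*π)) * Real.exp (-c^2/(2*t))) :=
  (bm_sup_tail hB ht c).trans (mul_le_mul_right (gauss_tail hc ht) 2)


end Helpers

theorem bm2d_max_drift_tail {Ω : Type*} [MeasurableSpace Ω] (μ : Measure Ω)
    [IsProbabilityMeasure μ] (W₁ W₂ : ℝ → Ω → ℝ)
    (hW₁ : IsStandardBM μ W₁) (hW₂ : IsStandardBM μ W₂)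
    (hindep : ProbabilityTheory.IndepFun (fun ω t => W₁ t ω) (fun ω t => W₂ t ω) μ)
    (t a : ℝ) (ht : 0 < t) (hta : t ≤ a) :
    μ {ω | ∃ s ∈ Set.Icc (0 : ℝ) t,
        a ≤ Real.sqrt (W₁ s ω ^ 2 + W₂ s ω ^ 2) + s / 2} ≤
      ENNReal.ofReal (16 * Real.sqrt t / (a * Real.sqrt Real.pi) *
        Real.exp (-a ^ 2 / (16 * t))) := by
  have ha : 0 < a := lt_of_lt_of_le ht hta
  set c : ℝ := a / (2 * Real.sqrt 2) with hcdef
  have hs2 : Real.sqrt 2 * Real.sqrt 2 = 2 := Real.mul_self_sqrt (by norm_num)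
  have hs2pos : (0:ℝ) < Real.sqrt 2 := Real.sqrt_pos.mpr (by norm_num)
  have hc : 0 < c := by rw [hcdef]; positivity
  have hc2 : c^2 = a^2/8 := by
    rw [hcdef, div_pow, mul_pow]
    rw [show (Real.sqrt 2)^2 = 2 from by rw [sq]; exact hs2]
    norm_num
  set E₁ := {ω : Ω | ∃ s ∈ Set.Icc (0:ℝ) t, c ≤ W₁ s ω} with hE1
  set E₂ := {ω : Ω | ∃ s ∈ Set.Icc (0:ℝ) t, c ≤ -W₁ s ω} with hE2
  set E₃ := {ω : Ω | ∃ s ∈ Set.Icc (0:ℝ) t, c ≤ W₂ s ω} with hE3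
  set E₄ := {ω : Ω | ∃ s ∈ Set.Icc (0:ℝ) t, c ≤ -W₂ s ω} with hE4
  have hsub : {ω : Ω | ∃ s ∈ Set.Icc (0 : ℝ) t,
      a ≤ Real.sqrt (W₁ s ω ^ 2 + W₂ s ω ^ 2) + s / 2} ⊆ E₁ ∪ E₂ ∪ E₃ ∪ E₄ := by
    rintro ω ⟨s, hs, hineq⟩
    have hXnn : (0:ℝ) ≤ W₁ s ω ^ 2 + W₂ s ω ^ 2 := by positivity
    have h1 : a/2 ≤ Real.sqrt (W₁ s ω ^ 2 + W₂ s ω ^ 2) := by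
      have : s/2 ≤ a/2 := by linarith [hs.2]
      linarith
    have h2 : a^2/4 ≤ W₁ s ω ^ 2 + W₂ s ω ^ 2 := by
      nlinarith [Real.sq_sqrt hXnn, Real.sqrt_nonneg (W₁ s ω ^ 2 + W₂ s ω ^ 2)]
    have hcase : c^2 ≤ W₁ s ω ^ 2 ∨ c^2 ≤ W₂ s ω ^ 2 := by
      by_cases h : c^2 ≤ W₁ s ω ^ 2
      · exact Or.inl h
      · right; push_neg at h; nlinarith [hc2]
    rcases hcase with h | h
    · have habs : c ≤ |W₁ s ω| := by nlinarith [sq_abs (W₁ s ω), abs_nonneg (W₁ s ω)]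
      rcases abs_cases (W₁ s ω) with ⟨he, _⟩ | ⟨he, _⟩
      · exact Or.inl (Or.inl (Or.inl ⟨s, hs, by rw [he] at habs; exact habs⟩))
      · exact Or.inl (Or.inl (Or.inr ⟨s, hs, by rw [he] at habs; exact habs⟩))
    · have habs : c ≤ |W₂ s ω| := by nlinarith [sq_abs (W₂ s ω), abs_nonneg (W₂ s ω)]
      rcases abs_cases (W₂ s ω) with ⟨he, _⟩ | ⟨he, _⟩
      · exact Or.inl (Or.inr ⟨s, hs, by rw [he] at habs; exact habs⟩)
      · exact Or.inr ⟨s, hs, by rw [he] at habs; exact habs⟩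
  set M : ℝ≥0∞ := 2 * ENNReal.ofReal
    (Real.sqrt t / (c * Real.sqrt (2*π)) * Real.exp (-c^2/(2*t))) with hM
  have hb1 : μ E₁ ≤ M := one_sided hW₁ ht hc
  have hb2 : μ E₂ ≤ M := by
    have := one_sided (hW₁.neg) ht hc
    exact this
  have hb3 : μ E₃ ≤ M := one_sided hW₂ ht hc
  have hb4 : μ E₄ ≤ M := by
    have := one_sided (hW₂.neg) ht hc
    exact this
  have htotal : μ {ω : Ω | ∃ s ∈ Set.Icc (0 : ℝ) t,
      a ≤ Real.sqrt (W₁ s ω ^ 2 + W₂ s ω ^ 2) + s / 2} ≤ 4 * M := by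
    calc μ {ω : Ω | ∃ s ∈ Set.Icc (0 : ℝ) t,
        a ≤ Real.sqrt (W₁ s ω ^ 2 + W₂ s ω ^ 2) + s / 2}
        ≤ μ (E₁ ∪ E₂ ∪ E₃ ∪ E₄) := measure_mono hsub
      _ ≤ μ (E₁ ∪ E₂ ∪ E₃) + μ E₄ := measure_union_le _ _
      _ ≤ (μ (E₁ ∪ E₂) + μ E₃) + μ E₄ := by gcongr; exact measure_union_le _ _
      _ ≤ ((μ E₁ + μ E₂) + μ E₃) + μ E₄ := by gcongr; exact measure_union_le _ _
      _ ≤ ((M + M) + M) + M := by gcongr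
      _ = 4 * M := by ring
  refine htotal.trans ?_
  rw [hM]
  have h4 : (4 : ℝ≥0∞) * (2 * ENNReal.ofReal (Real.sqrt t / (c * Real.sqrt (2*π)) *
      Real.exp (-c^2/(2*t)))) = ENNReal.ofReal (8 * (Real.sqrt t / (c * Real.sqrt (2*π)) *
      Real.exp (-c^2/(2*t)))) := by
    rw [ENNReal.ofReal_mul (by norm_num : (0:ℝ) ≤ 8)]
    rw [show ENNReal.ofReal (8:ℝ) = (8:ℝ≥0∞) from by norm_num]
    ring
  rw [h4]
  apply ENNReal.ofReal_le_ofReal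
  have hexp : -c^2/(2*t) = -a^2/(16*t) := by
    rw [hc2]; field_simp; ring
  rw [hexp]
  have hsqrt2pi : Real.sqrt (2*π) = Real.sqrt 2 * Real.sqrt π := Real.sqrt_mul (by norm_num) π
  have hspi : (0:ℝ) < Real.sqrt π := Real.sqrt_pos.mpr Real.pi_pos
  rw [hcdef, hsqrt2pi]
  rw [div_mul_eq_mul_div, div_mul_eq_mul_div]
  have key2 : a * (Real.sqrt 2 * Real.sqrt π) / (2 * Real.sqrt 2) = a * Real.sqrt π / 2 := by
    rw [div_eq_div_iff (by positivity) (by norm_num)]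
    ring_nf
  rw [key2]
  apply le_of_eq
  have hne : a * Real.sqrt π ≠ 0 := by positivity
  field_simp
  ring
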